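/- There exist an infinite-dimensional separable complex Hilbert space H and an invertible bounded linear operator T : H → H (a continuous linear equivalence) such that T is Li-Yorke chaotic but its inverse T⁻¹ is not Li-Yorke chaotic. -/

import Mathlib

/-- `{x, y}` is a Li-Yorke chaotic pair for `T` if the distances between the iterates
`Tⁿ x` and `Tⁿ y` have positive limsup and zero liminf. -/
def LiYorkePair {X : Type*} [PseudoEMetricSpace X] (T : X → X) (x y : X) : Prop :=
  0 < Filter.limsup (fun n : ℕ => edist (T^[n] x) (T^[n] y)) Filter.atTop ∧
    Filter.liminf (fun n : ℕ => edist (T^[n] x) (T^[n] y)) Filter.atTop = 0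

/-- `T` is Li-Yorke chaotic if there is an uncountable set all of whose pairs of distinct
points are Li-Yorke chaotic pairs for `T`. -/
def LiYorkeChaotic {X : Type*} [PseudoEMetricSpace X] (T : X → X) : Prop :=
  ∃ Γ : Set X, ¬ Γ.Countable ∧ ∀ x ∈ Γ, ∀ y ∈ Γ, x ≠ y → LiYorkePair T x y

noncomputable section LYAux

open Filter Topology TopologicalSpace
open scoped ENNReal

namespace LYAux

/-- The underlying Hilbert space: `ℓ²(ℤ, ℂ)`. -/
abbrev Hsp : Type := lp (fun _ : ℤ => ℂ) 2

/-- Tent-shaped exponent function. -/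
def tt : ℕ → ℕ := fun n =>
  if n = 0 then 0 else min (n - 4 ^ Nat.log 4 n) (4 ^ (Nat.log 4 n + 1) - n)

lemma tt_lip (n : ℕ) : tt (n + 1) ≤ tt n + 1 ∧ tt n ≤ tt (n + 1) + 1 := by
  rcases Nat.eq_zero_or_pos n with rfl | hn
  · simp [tt]
  · have h1 : 4 ^ Nat.log 4 n ≤ n := Nat.pow_log_le_self 4 hn.ne'
    have h2 : n < 4 ^ (Nat.log 4 n + 1) := Nat.lt_pow_succ_log_self (by norm_num) n
    rcases lt_or_eq_of_le (Nat.succ_le_of_lt h2) with h3 | h3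
    · have hl : Nat.log 4 (n + 1) = Nat.log 4 n :=
        Nat.log_eq_of_pow_le_of_lt_pow (le_trans h1 (Nat.le_succ n)) h3
      simp only [tt, if_neg (Nat.succ_ne_zero n), if_neg hn.ne', hl]
      omega
    · have hl : Nat.log 4 (n + 1) = Nat.log 4 n + 1 := by
        have h3' : n + 1 = 4 ^ (Nat.log 4 n + 1) := by omega
        rw [h3', Nat.log_pow (by norm_num)]
      simp only [tt, if_neg (Nat.succ_ne_zero n), if_neg hn.ne', hl]
      omega

lemma tt_pow (k : ℕ) : tt (4 ^ k) = 0 := by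
  have h : (4:ℕ) ^ k ≠ 0 := by positivity
  simp [tt, h, Nat.log_pow (by norm_num : 1 < 4)]

lemma tt_mid (k : ℕ) : tt (2 * 4 ^ k) = 4 ^ k := by
  have h4 : (0:ℕ) < 4 ^ k := by positivity
  have hlt : 2 * 4 ^ k < 4 ^ (k + 1) := by rw [pow_succ]; omega
  have hl : Nat.log 4 (2 * 4 ^ k) = k :=
    Nat.log_eq_of_pow_le_of_lt_pow (by omega) hlt
  have hne : 2 * 4 ^ k ≠ 0 := by positivity
  simp only [tt, if_neg hne, hl, pow_succ]
  omega

/-- Exponent of the comparison sequence, as an integer. -/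
def ee : ℤ → ℤ := fun m => if m < 0 then -m else -(tt m.toNat : ℤ)

/-- The comparison sequence `bb m = 2 ^ ee m`. -/
def bb : ℤ → ℝ := fun m => (2:ℝ) ^ ee m

lemma bb_pos (m : ℤ) : 0 < bb m := zpow_pos (by norm_num) _

lemma bb_ne (m : ℤ) : bb m ≠ 0 := (bb_pos m).ne'

lemma ee_lip (k : ℤ) : ee k ≤ ee (k - 1) + 1 ∧ ee (k - 1) ≤ ee k + 1 := by
  rcases le_or_gt k 0 with hk | hk
  · have h1 : k - 1 < 0 := by omega
    rcases lt_or_eq_of_le hk with hk0 | rfl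
    · simp only [ee, if_pos h1, if_pos hk0]; omega
    · have h0 : ¬ ((0:ℤ) < 0) := by omega
      simp only [ee, if_pos h1, if_neg (lt_irrefl (0:ℤ))]
      norm_num [tt]
  · have h0 : ¬ (k < 0) := by omega
    have h1 : ¬ (k - 1 < 0) := by omega
    have hn : 1 ≤ k.toNat := by omega
    have hk1 : (k - 1).toNat = k.toNat - 1 := by omega
    have hlip := tt_lip (k.toNat - 1)
    have hsub : k.toNat - 1 + 1 = k.toNat := by omega
    rw [hsub] at hlip
    simp only [ee, if_neg h0, if_neg h1, hk1]
    omega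

lemma zpow2_le {a b : ℤ} (h : a ≤ b + 1) : (2:ℝ) ^ a ≤ 2 * (2:ℝ) ^ b := by
  have : (2:ℝ) * (2:ℝ) ^ b = (2:ℝ) ^ (b + 1) := by
    rw [zpow_add_one₀ (by norm_num : (2:ℝ) ≠ 0)]; ring
  rw [this]
  exact zpow_le_zpow_right₀ (by norm_num) h

lemma bb_ratio (k : ℤ) : bb k ≤ 2 * bb (k - 1) ∧ bb (k - 1) ≤ 2 * bb k := by
  obtain ⟨h1, h2⟩ := ee_lip k
  exact ⟨zpow2_le h1, zpow2_le h2⟩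

lemma bb_nat (n : ℕ) : bb (n : ℤ) = ((2:ℝ) ^ tt n)⁻¹ := by
  have h : ¬ ((n:ℤ) < 0) := by omega
  have h2 : ((n:ℤ)).toNat = n := by omega
  simp [bb, ee, h, h2, zpow_neg, zpow_natCast]

lemma bb_pow4 (k : ℕ) : bb ((4 ^ k : ℕ) : ℤ) = 1 := by
  rw [bb_nat, tt_pow]; norm_num

lemma bb_mid (k : ℕ) : bb ((2 * 4 ^ k : ℕ) : ℤ) = ((2:ℝ) ^ (4 ^ k : ℕ))⁻¹ := by
  rw [bb_nat, tt_mid]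

lemma bb_one_le {m : ℤ} (hm : m ≤ 0) : 1 ≤ bb m := by
  have he : 0 ≤ ee m := by
    rcases lt_or_eq_of_le hm with h | rfl
    · simp only [ee, if_pos h]; omega
    · simp [ee, tt]
  calc (1:ℝ) = 2 ^ (0:ℤ) := by norm_num
  _ ≤ 2 ^ ee m := zpow_le_zpow_right₀ (by norm_num) he

/-- Forward weight at position `k`. -/
def wT (k : ℤ) : ℂ := ((bb k / bb (k - 1) : ℝ) : ℂ)

/-- Backward weight at position `k`. -/
def wS (k : ℤ) : ℂ := ((bb k / bb (k + 1) : ℝ) : ℂ)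

lemma wT_bound (k : ℤ) : ‖wT k‖ ≤ 2 := by
  rw [wT, Complex.norm_real, Real.norm_eq_abs,
    abs_of_pos (div_pos (bb_pos k) (bb_pos (k - 1)))]
  rw [div_le_iff₀ (bb_pos (k - 1))]
  have := (bb_ratio k).1
  linarith

lemma wS_bound (k : ℤ) : ‖wS k‖ ≤ 2 := by
  rw [wS, Complex.norm_real, Real.norm_eq_abs,
    abs_of_pos (div_pos (bb_pos k) (bb_pos (k + 1)))]
  rw [div_le_iff₀ (bb_pos (k + 1))]
  have := (bb_ratio (k + 1)).2
  simpa using this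

lemma pt_eq : ((2:ℝ≥0∞)).toReal = 2 := by norm_num

/-- Membership lemma for weighted shifts. -/
lemma mem_shift (c : ℤ → ℂ) (hc : ∀ k, ‖c k‖ ≤ 2) (e : ℤ ≃ ℤ) (x : Hsp) :
    Memℓp (fun k => c k * x (e k)) 2 := by
  apply memℓp_gen
  have hx : Summable fun k : ℤ => ‖x k‖ ^ ((2:ℝ≥0∞)).toReal :=
    (lp.memℓp x).summable (by norm_num)
  have hx' : Summable fun k : ℤ => ‖x (e k)‖ ^ ((2:ℝ≥0∞)).toReal :=
    (e.summable_iff (f := fun k : ℤ => ‖x k‖ ^ ((2:ℝ≥0∞)).toReal)).2 hx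
  refine Summable.of_nonneg_of_le (fun k => ?_) (fun k => ?_) (hx'.mul_left 4)
  · positivity
  · have h1 : ‖c k * x (e k)‖ ≤ 2 * ‖x (e k)‖ := by
      rw [norm_mul]
      exact mul_le_mul_of_nonneg_right (hc k) (norm_nonneg _)
    calc ‖c k * x (e k)‖ ^ ((2:ℝ≥0∞)).toReal
        ≤ (2 * ‖x (e k)‖) ^ ((2:ℝ≥0∞)).toReal :=
          Real.rpow_le_rpow (norm_nonneg _) h1 (by norm_num)
      _ = (2:ℝ) ^ ((2:ℝ≥0∞)).toReal * ‖x (e k)‖ ^ ((2:ℝ≥0∞)).toReal :=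
          Real.mul_rpow (by norm_num) (norm_nonneg _)
      _ = 4 * ‖x (e k)‖ ^ ((2:ℝ≥0∞)).toReal := by
          rw [pt_eq]
          norm_num [Real.rpow_two]

/-- Norm bound for weighted shifts. -/
lemma norm_shift (c : ℤ → ℂ) (hc : ∀ k, ‖c k‖ ≤ 2) (e : ℤ ≃ ℤ) (x : Hsp)
    (y : Hsp) (hy : ∀ k, y k = c k * x (e k)) : ‖y‖ ≤ 2 * ‖x‖ := by
  apply lp.norm_le_of_forall_sum_le (by norm_num) (by positivity)
  intro s
  have step1 : ∀ k ∈ s, ‖y k‖ ^ ((2:ℝ≥0∞)).toReal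
      ≤ 4 * ‖x (e k)‖ ^ ((2:ℝ≥0∞)).toReal := by
    intro k _
    rw [hy k]
    have h1 : ‖c k * x (e k)‖ ≤ 2 * ‖x (e k)‖ := by
      rw [norm_mul]
      exact mul_le_mul_of_nonneg_right (hc k) (norm_nonneg _)
    calc ‖c k * x (e k)‖ ^ ((2:ℝ≥0∞)).toReal
        ≤ (2 * ‖x (e k)‖) ^ ((2:ℝ≥0∞)).toReal :=
          Real.rpow_le_rpow (norm_nonneg _) h1 (by norm_num)
      _ = (2:ℝ) ^ ((2:ℝ≥0∞)).toReal * ‖x (e k)‖ ^ ((2:ℝ≥0∞)).toReal :=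
          Real.mul_rpow (by norm_num) (norm_nonneg _)
      _ = 4 * ‖x (e k)‖ ^ ((2:ℝ≥0∞)).toReal := by
          rw [pt_eq]; norm_num [Real.rpow_two]
  calc ∑ k ∈ s, ‖y k‖ ^ ((2:ℝ≥0∞)).toReal
      ≤ ∑ k ∈ s, 4 * ‖x (e k)‖ ^ ((2:ℝ≥0∞)).toReal := Finset.sum_le_sum step1
    _ = 4 * ∑ k ∈ s, ‖x (e k)‖ ^ ((2:ℝ≥0∞)).toReal := by rw [Finset.mul_sum]
    _ = 4 * ∑ j ∈ s.map e.toEmbedding, ‖x j‖ ^ ((2:ℝ≥0∞)).toReal := by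
        rw [Finset.sum_map]; rfl
    _ ≤ 4 * ‖x‖ ^ ((2:ℝ≥0∞)).toReal := by
        have := lp.sum_rpow_le_norm_rpow (by norm_num : 0 < ((2:ℝ≥0∞)).toReal) x
          (s.map e.toEmbedding)
        linarith
    _ = (2 * ‖x‖) ^ ((2:ℝ≥0∞)).toReal := by
        rw [Real.mul_rpow (by norm_num) (norm_nonneg _), pt_eq]
        norm_num [Real.rpow_two]

/-- The forward weighted shift. -/
def Tfun (x : Hsp) : Hsp :=
  ⟨fun k => wT k * x (k - 1), mem_shift wT wT_bound (Equiv.subRight (1:ℤ)) x⟩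

/-- The backward weighted shift. -/
def Sfun (x : Hsp) : Hsp :=
  ⟨fun k => wS k * x (k + 1), mem_shift wS wS_bound (Equiv.addRight (1:ℤ)) x⟩

lemma Tfun_apply (x : Hsp) (k : ℤ) : (Tfun x) k = wT k * x (k - 1) := rfl

lemma Sfun_apply (x : Hsp) (k : ℤ) : (Sfun x) k = wS k * x (k + 1) := rfl

def Tlin : Hsp →ₗ[ℂ] Hsp where
  toFun := Tfun
  map_add' x y := by
    apply lp.ext; funext k
    simp only [Tfun_apply, lp.coeFn_add, Pi.add_apply]
    ring
  map_smul' a x := by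
    apply lp.ext; funext k
    simp only [Tfun_apply, lp.coeFn_smul, Pi.smul_apply, RingHom.id_apply, smul_eq_mul]
    ring

def Slin : Hsp →ₗ[ℂ] Hsp where
  toFun := Sfun
  map_add' x y := by
    apply lp.ext; funext k
    simp only [Sfun_apply, lp.coeFn_add, Pi.add_apply]
    ring
  map_smul' a x := by
    apply lp.ext; funext k
    simp only [Sfun_apply, lp.coeFn_smul, Pi.smul_apply, RingHom.id_apply, smul_eq_mul]
    ring

lemma wT_mul_wS (k : ℤ) : wT k * wS (k - 1) = 1 := by
  have h : (k - 1 + 1) = k := by ring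
  rw [wT, wS, h, ← Complex.ofReal_mul]
  have h2 : bb k / bb (k - 1) * (bb (k - 1) / bb k) = 1 := by
    rw [div_mul_div_cancel₀ (bb_ne _)]
    exact div_self (bb_ne k)
  rw [h2, Complex.ofReal_one]

lemma wS_mul_wT (k : ℤ) : wS k * wT (k + 1) = 1 := by
  have h : (k + 1 - 1) = k := by ring
  rw [wT, wS, h, ← Complex.ofReal_mul]
  have h2 : bb k / bb (k + 1) * (bb (k + 1) / bb k) = 1 := by
    rw [div_mul_div_cancel₀ (bb_ne _)]
    exact div_self (bb_ne k)
  rw [h2, Complex.ofReal_one]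

lemma TS_id (x : Hsp) : Tfun (Sfun x) = x := by
  apply lp.ext; funext k
  rw [Tfun_apply, Sfun_apply, ← mul_assoc, wT_mul_wS, one_mul]
  have h : k - 1 + 1 = k := by ring
  rw [h]

lemma ST_id (x : Hsp) : Sfun (Tfun x) = x := by
  apply lp.ext; funext k
  rw [Sfun_apply, Tfun_apply, ← mul_assoc, wS_mul_wT, one_mul]
  have h : k + 1 - 1 = k := by ring
  rw [h]

/-- The weighted shift as a continuous linear equivalence. -/
def Teq : Hsp ≃L[ℂ] Hsp :=
  { (LinearEquiv.ofLinear Tlin Slin (LinearMap.ext TS_id) (LinearMap.ext ST_id) : Hsp ≃ₗ[ℂ] Hsp) with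
    continuous_toFun := AddMonoidHomClass.continuous_of_bound Tlin 2 fun x =>
      norm_shift wT wT_bound (Equiv.subRight (1:ℤ)) x (Tfun x) (Tfun_apply x)
    continuous_invFun := AddMonoidHomClass.continuous_of_bound Slin 2 fun x =>
      norm_shift wS wS_bound (Equiv.addRight (1:ℤ)) x (Sfun x) (Sfun_apply x) }

lemma Teq_apply (x : Hsp) : Teq x = Tfun x := rfl

lemma Teq_symm_apply (x : Hsp) : Teq.symm x = Sfun x := rfl

lemma single_sub (i : ℤ) (a b : ℂ) :
    (lp.single 2 i a : Hsp) - lp.single 2 i b = lp.single 2 i (a - b) := by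
  apply lp.ext; funext j
  by_cases h : j = i
  · subst h
    simp [lp.single_apply_self]
  · simp [lp.single_apply_ne 2 i _ h]

lemma T_single (m : ℤ) (a : ℂ) :
    Teq (lp.single 2 m a) = (lp.single 2 (m + 1) (wT (m + 1) * a) : Hsp) := by
  apply lp.ext; funext k
  rw [Teq_apply, Tfun_apply]
  by_cases h : k = m + 1
  · subst h
    have h2 : m + 1 - 1 = m := by ring
    rw [h2, lp.single_apply_self, lp.single_apply_self]
  · have h2 : k - 1 ≠ m := by omega
    rw [lp.single_apply_ne 2 m _ h2, lp.single_apply_ne 2 (m+1) _ h, mul_zero]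

lemma bb_zero : bb 0 = 1 := by
  simp [bb, ee, tt]

lemma T_iter_single (n : ℕ) (a : ℂ) :
    (⇑Teq)^[n] (lp.single 2 (0:ℤ) a) = (lp.single 2 (n : ℤ) (((bb (n:ℤ) : ℝ) : ℂ) * a) : Hsp) := by
  induction n with
  | zero =>
      simp [bb_zero]
  | succ n ih =>
      rw [Function.iterate_succ_apply', ih, T_single]
      have hidx : ((n:ℤ) + 1) = ((n + 1 : ℕ) : ℤ) := by push_cast; ring
      rw [hidx]
      congr 1
      rw [wT]
      have h2 : ((n + 1 : ℕ) : ℤ) - 1 = (n : ℤ) := by push_cast; ring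
      rw [h2, ← mul_assoc, ← Complex.ofReal_mul, div_mul_cancel₀ _ (bb_ne (n:ℤ))]

lemma S_iter_apply (n : ℕ) (w : Hsp) (k : ℤ) :
    ((⇑Teq.symm)^[n] w) k = ((bb k / bb (k + n) : ℝ) : ℂ) * w (k + n) := by
  induction n generalizing w k with
  | zero =>
      simp [div_self (bb_ne k)]
  | succ n ih =>
      rw [Function.iterate_succ_apply, ih (Teq.symm w) k, Teq_symm_apply, Sfun_apply, wS,
        ← mul_assoc, ← Complex.ofReal_mul]
      rw [div_mul_div_cancel₀ (bb_ne (k + (n:ℤ)))]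
      have hidx : k + (n:ℤ) + 1 = k + ((n+1 : ℕ) : ℤ) := by push_cast; ring
      rw [hidx]

lemma iter_sub (f : Hsp → Hsp) (hf : ∀ a b : Hsp, f (a - b) = f a - f b) (n : ℕ)
    (x y : Hsp) : f^[n] x - f^[n] y = f^[n] (x - y) := by
  induction n generalizing x y with
  | zero => simp
  | succ n ih =>
      rw [Function.iterate_succ_apply, Function.iterate_succ_apply,
        Function.iterate_succ_apply, ih, ← hf]

set_option maxHeartbeats 1000000 in
lemma teq_liYorke : LiYorkeChaotic (⇑Teq) := by
  refine ⟨Set.range (fun c : ℝ => (lp.single 2 (0:ℤ) (c : ℂ) : Hsp)), ?_, ?_⟩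
  · intro hc
    have hinj : Function.Injective (fun c : ℝ => (lp.single 2 (0:ℤ) (c : ℂ) : Hsp)) := by
      intro a b h
      have h2 := congrArg (fun f : Hsp => f (0:ℤ)) h
      simp only [lp.single_apply_self] at h2
      exact_mod_cast h2
    have := (hc.preimage hinj)
    rw [Set.preimage_range] at this
    exact Cardinal.not_countable_real this
  · rintro x ⟨c, rfl⟩ y ⟨c', rfl⟩ hxy
    have hcc : (c : ℂ) ≠ (c' : ℂ) :=
      fun h => hxy (congrArg (fun z : ℂ => (lp.single 2 (0:ℤ) z : Hsp)) h)
    set d : ℂ := (c : ℂ) - (c' : ℂ) with hd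
    have hd0 : d ≠ 0 := sub_ne_zero.2 hcc
    have hdist : ∀ n : ℕ,
        edist ((⇑Teq)^[n] (lp.single 2 (0:ℤ) (c:ℂ))) ((⇑Teq)^[n] (lp.single 2 (0:ℤ) (c':ℂ)))
          = ENNReal.ofReal (bb (n:ℤ) * ‖d‖) := by
      intro n
      rw [edist_dist, dist_eq_norm, T_iter_single, T_iter_single, single_sub, ← mul_sub]
      have hns : ‖(lp.single 2 ((n:ℕ):ℤ) (((bb (n:ℤ):ℝ):ℂ) * d) : Hsp)‖
          = ‖((bb (n:ℤ):ℝ):ℂ) * d‖ :=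
        lp.norm_single (E := fun _ : ℤ => ℂ) (p := 2) (by norm_num)
          ((n:ℕ):ℤ) (((bb (n:ℤ):ℝ):ℂ) * d)
      rw [hns, norm_mul, Complex.norm_real, Real.norm_eq_abs, abs_of_pos (bb_pos _)]
    constructor
    · have hfreq : ∃ᶠ n in atTop,
          ENNReal.ofReal ‖d‖ ≤
            edist ((⇑Teq)^[n] (lp.single 2 (0:ℤ) (c:ℂ)))
              ((⇑Teq)^[n] (lp.single 2 (0:ℤ) (c':ℂ))) := by
        rw [Filter.frequently_atTop]
        intro N
        refine ⟨4 ^ N, (Nat.lt_pow_self (n := N) (by norm_num : 1 < 4)).le, ?_⟩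
        rw [hdist (4 ^ N)]
        have := bb_pow4 N
        rw [this, one_mul]
      calc (0:ℝ≥0∞) < ENNReal.ofReal ‖d‖ := by
            rw [ENNReal.ofReal_pos]; exact norm_pos_iff.2 hd0
        _ ≤ _ := Filter.le_limsup_of_frequently_le hfreq
    · apply le_antisymm _ (zero_le)
      set u : ℕ → ℝ≥0∞ := fun n =>
        edist ((⇑Teq)^[n] (lp.single 2 (0:ℤ) (c:ℂ)))
          ((⇑Teq)^[n] (lp.single 2 (0:ℤ) (c':ℂ))) with hu
      set φ : ℕ → ℕ := fun j => 2 * 4 ^ j with hφdef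
      have hφ : Tendsto φ atTop atTop := by
        apply tendsto_atTop_mono (fun j => ?_) tendsto_id
        have : j < 4 ^ j := Nat.lt_pow_self (n := j) (by norm_num : 1 < 4)
        simp only [hφdef, id_eq]
        omega
      have h1 : Filter.liminf u atTop ≤ Filter.liminf (u ∘ φ) atTop := by
        rw [Filter.liminf_comp]
        exact Filter.liminf_le_liminf_of_le hφ
      refine h1.trans (le_of_eq ?_)
      apply Filter.Tendsto.liminf_eq
      have hreal : Tendsto (fun j : ℕ => bb ((2 * 4 ^ j : ℕ) : ℤ) * ‖d‖) atTop (𝓝 0) := by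
        have hp : Tendsto (fun j : ℕ => (2:ℝ) ^ (4 ^ j : ℕ)) atTop atTop := by
          apply (tendsto_pow_atTop_atTop_of_one_lt (by norm_num : (1:ℝ) < 2)).comp
          apply tendsto_atTop_mono (fun j => (Nat.lt_pow_self (n := j) (by norm_num : 1 < 4)).le) tendsto_id
        have hinv : Tendsto (fun j : ℕ => ((2:ℝ) ^ (4 ^ j : ℕ))⁻¹) atTop (𝓝 0) :=
          hp.inv_tendsto_atTop
        have := hinv.mul_const ‖d‖
        rw [zero_mul] at this
        convert this using 2 with j
        rw [bb_mid]
      have : Tendsto (fun j : ℕ => ENNReal.ofReal (bb ((2 * 4 ^ j : ℕ) : ℤ) * ‖d‖))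
          atTop (𝓝 0) := by
        have := (ENNReal.tendsto_ofReal hreal)
        rwa [ENNReal.ofReal_zero] at this
      convert this using 1
      funext j
      simp only [Function.comp_apply, hu, hφdef]
      rw [hdist]

set_option maxHeartbeats 1000000 in
lemma teq_symm_not_liYorke : ¬ LiYorkeChaotic (⇑Teq.symm) := by
  rintro ⟨Γ, hΓ, hpair⟩
  have hnt : Γ.Nontrivial := by
    rw [← Set.not_subsingleton_iff]
    exact fun h => hΓ h.countable
  obtain ⟨x, hx, y, hy, hxy⟩ := hnt
  obtain ⟨-, hinf⟩ := hpair x hx y hy hxy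
  set v : Hsp := x - y with hv
  have hv0 : v ≠ 0 := sub_ne_zero.2 hxy
  obtain ⟨m, hm⟩ : ∃ m : ℤ, v m ≠ 0 := by
    by_contra h
    push_neg at h
    apply hv0
    apply lp.ext
    funext k
    simpa using h k
  have hsub : ∀ n : ℕ, (⇑Teq.symm)^[n] x - (⇑Teq.symm)^[n] y = (⇑Teq.symm)^[n] v := by
    intro n
    exact iter_sub _ (fun a b => map_sub Teq.symm a b) n x y
  have hmn : 0 < ‖v m‖ := norm_pos_iff.2 hm
  set C : ℝ := (bb m)⁻¹ * ‖v m‖ with hC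
  have hCpos : 0 < C := by
    apply mul_pos _ hmn
    exact inv_pos.2 (bb_pos m)
  have hev : ∀ᶠ n : ℕ in atTop,
      ENNReal.ofReal C ≤ edist ((⇑Teq.symm)^[n] x) ((⇑Teq.symm)^[n] y) := by
    filter_upwards [Filter.eventually_ge_atTop (m.toNat + 1)] with n hn
    rw [edist_dist, dist_eq_norm, hsub n]
    apply ENNReal.ofReal_le_ofReal
    have hmn2 : m - (n:ℤ) ≤ 0 := by omega
    have hkey : C ≤ ‖((⇑Teq.symm)^[n] v) (m - n)‖ := by
      rw [S_iter_apply]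
      have hidx : m - (n:ℤ) + (n:ℤ) = m := by ring
      rw [hidx, norm_mul, Complex.norm_real, Real.norm_eq_abs,
        abs_of_pos (div_pos (bb_pos _) (bb_pos _))]
      apply mul_le_mul_of_nonneg_right _ (norm_nonneg _)
      rw [inv_eq_one_div]
      gcongr
      · exact (bb_pos m).le
      · exact bb_one_le hmn2
    calc C ≤ ‖((⇑Teq.symm)^[n] v) (m - (n:ℤ))‖ := hkey
      _ ≤ ‖(⇑Teq.symm)^[n] v‖ :=
        lp.norm_apply_le_norm (by norm_num : (2:ℝ≥0∞) ≠ 0) _ _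
  have hli : ENNReal.ofReal C ≤
      Filter.liminf (fun n : ℕ => edist ((⇑Teq.symm)^[n] x) ((⇑Teq.symm)^[n] y)) atTop :=
    Filter.le_liminf_of_le (by isBoundedDefault) hev
  rw [hinf] at hli
  have hpos : (0:ℝ≥0∞) < ENNReal.ofReal C := ENNReal.ofReal_pos.2 hCpos
  exact absurd (le_antisymm hli (zero_le)) hpos.ne'

end LYAux

end LYAux

/-- There exist an infinite-dimensional separable complex Hilbert space `H` and an invertible
bounded linear operator `T : H → H` such that `T` is Li-Yorke chaotic but `T⁻¹` is not. -/
theorem stmt_0 :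
    ∃ (H : Type) (_ : NormedAddCommGroup H) (_ : InnerProductSpace ℂ H),
      CompleteSpace H ∧ TopologicalSpace.SeparableSpace H ∧ ¬ FiniteDimensional ℂ H ∧
        ∃ T : H ≃L[ℂ] H, LiYorkeChaotic (⇑T) ∧ ¬ LiYorkeChaotic (⇑T.symm) := by
  classical
  refine ⟨LYAux.Hsp, inferInstance, inferInstance, inferInstance, ?_, ?_,
    LYAux.Teq, LYAux.teq_liYorke, LYAux.teq_symm_not_liYorke⟩
  · -- separability
    let b : HilbertBasis ℤ ℂ LYAux.Hsp := default
    have hs : TopologicalSpace.IsSeparable (Set.range ⇑b) :=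
      (Set.countable_range _).isSeparable
    have hsp : TopologicalSpace.IsSeparable
        ((Submodule.span ℂ (Set.range ⇑b) : Submodule ℂ LYAux.Hsp) : Set LYAux.Hsp) :=
      hs.span
    have hd := b.dense_span
    have huniv : TopologicalSpace.IsSeparable (Set.univ : Set LYAux.Hsp) := by
      have hcl : closure ((Submodule.span ℂ (Set.range ⇑b) : Submodule ℂ LYAux.Hsp)
          : Set LYAux.Hsp) = Set.univ := by
        rw [← Submodule.topologicalClosure_coe, hd, Submodule.top_coe]
      rw [← hcl]
      exact hsp.closure
    exact TopologicalSpace.isSeparable_univ_iff.1 huniv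
  · -- infinite dimensional
    intro hfd
    let b : HilbertBasis ℤ ℂ LYAux.Hsp := default
    have hli := b.orthonormal.linearIndependent
    have : Finite ℤ := hli.finite
    exact absurd this (by exact fun h => Int.infinite.not_finite h)
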